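/- arXiv:1412.6168 — 3 statements merged into one kernel-verified Lean document; each statement's English description precedes it below -/
import Mathlib

section
/- For real numbers a, b, c, d with c ≤ d, the integral ∫_c^d |a + b·h| dh is at least (√2 − 1)(d − c)·max{|a + b·c|, |a + b·d|}. -/
open Real

/-- The integral of an affine function over an interval. -/
lemma integral_affine' (a b x y : ℝ) :
    (∫ h in x..y, (a + b * h)) = (y - x) * ((a + b * x) + (a + b * y)) / 2 := by
  have h1 : (∫ h in x..y, (a + b * h)) = (∫ _ in x..y, a) + ∫ h in x..y, b * h :=
    intervalIntegral.integral_add intervalIntegrable_const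
      ((continuous_const.mul continuous_id).intervalIntegrable x y)
  rw [h1, intervalIntegral.integral_const, intervalIntegral.integral_const_mul,
    integral_id, smul_eq_mul]
  ring

lemma max_abs_le_abs_add (p q : ℝ) (h : 0 ≤ p * q) : max |p| |q| ≤ |p + q| := by
  rcases le_total 0 p with hp | hp <;> rcases le_total 0 q with hq | hq
  · rw [abs_of_nonneg hp, abs_of_nonneg hq, abs_of_nonneg (by linarith : (0:ℝ) ≤ p + q)]
    exact max_le (by linarith) (by linarith)
  · have h0 : p * q = 0 := le_antisymm (mul_nonpos_of_nonneg_of_nonpos hp hq) h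
    rcases mul_eq_zero.mp h0 with h1 | h1 <;> simp [h1]
  · have h0 : p * q = 0 := le_antisymm (mul_nonpos_of_nonpos_of_nonneg hp hq) h
    rcases mul_eq_zero.mp h0 with h1 | h1 <;> simp [h1]
  · rw [abs_of_nonpos hp, abs_of_nonpos hq, abs_of_nonpos (by linarith : p + q ≤ 0)]
    exact max_le (by linarith) (by linarith)

lemma case1_ineq (s L M A : ℝ) (hs_le : s ≤ 3/2) (hL : 0 ≤ L) (hM : 0 ≤ M)
    (hMA : M ≤ A) : (s - 1) * L * M ≤ L * A / 2 := by
  nlinarith [mul_le_mul_of_nonneg_left hMA hL, mul_nonneg hL hM]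

lemma key_ineq (s B x y : ℝ) (hs2 : s ^ 2 = 2) (hB : 0 ≤ B) (hx : 0 ≤ x) (hy : 0 ≤ y) :
    (s - 1) * ((x + y)) * max (B * x) (B * y) ≤ x * (B * x) / 2 + y * (B * y) / 2 := by
  rcases max_cases (B * x) (B * y) with ⟨hm, _⟩ | ⟨hm, _⟩ <;> rw [hm]
  · have hsq : 0 ≤ B * ((s - 1) * x - y) ^ 2 := mul_nonneg hB (sq_nonneg _)
    have hexp : B * ((s - 1) * x - y) ^ 2
        = 3*B*x^2 - 2*s*B*x^2 - 2*s*B*x*y + 2*B*x*y + B*y^2 := by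
      linear_combination B * x ^ 2 * hs2
    nlinarith [hsq, hexp]
  · have hsq : 0 ≤ B * ((s - 1) * y - x) ^ 2 := mul_nonneg hB (sq_nonneg _)
    have hexp : B * ((s - 1) * y - x) ^ 2
        = 3*B*y^2 - 2*s*B*y^2 - 2*s*B*x*y + 2*B*x*y + B*x^2 := by
      linear_combination B * y ^ 2 * hs2
    nlinarith [hsq, hexp]

theorem integral_abs_affine_ge (a b c d : ℝ) (hcd : c ≤ d) :
    (Real.sqrt 2 - 1) * (d - c) * max |a + b * c| |a + b * d| ≤
      ∫ h in c..d, |a + b * h| := by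
  have hs2 : Real.sqrt 2 ^ 2 = 2 := Real.sq_sqrt (by norm_num)
  have hs0 : (0:ℝ) ≤ Real.sqrt 2 := Real.sqrt_nonneg 2
  have hs_le : Real.sqrt 2 ≤ 3/2 := by nlinarith
  have hcont : Continuous fun h : ℝ => |a + b * h| := by continuity
  have hL : (0:ℝ) ≤ d - c := by linarith
  rcases le_or_gt 0 ((a + b * c) * (a + b * d)) with hpq | hpq
  · -- constant sign case: lower bound by |∫ f|
    have habs : |∫ h in c..d, (a + b * h)| ≤ ∫ h in c..d, |a + b * h| :=
      intervalIntegral.abs_integral_le_integral_abs hcd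
    rw [integral_affine' a b c d] at habs
    have hsum : max |a + b * c| |a + b * d| ≤ |(a + b * c) + (a + b * d)| :=
      max_abs_le_abs_add _ _ hpq
    calc (Real.sqrt 2 - 1) * (d - c) * max |a + b * c| |a + b * d|
        ≤ (d - c) * |(a + b * c) + (a + b * d)| / 2 :=
          case1_ineq _ _ _ _ hs_le hL (le_max_of_le_left (abs_nonneg _)) hsum
      _ = |(d - c) * ((a + b * c) + (a + b * d)) / 2| := by
          rw [abs_div, abs_mul, abs_of_nonneg hL]; norm_num
      _ ≤ _ := habs
  · -- sign change: split at the root r = -a/b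
    have hb : b ≠ 0 := by
      rintro rfl
      nlinarith [sq_nonneg a]
    set r := -a / b with hr
    have hfr : a + b * r = 0 := by rw [hr, mul_div_cancel₀ (-a) hb]; ring
    have hpr : a + b * c = b * (c - r) := by linear_combination hfr
    have hqr : a + b * d = b * (d - r) := by linear_combination hfr
    rw [hpr, hqr] at hpq
    have hprod : (c - r) * (d - r) < 0 := by
      by_contra h
      push_neg at h
      nlinarith [mul_nonneg (sq_nonneg b) h]
    have hcr1 : c < r := by
      by_contra h
      push_neg at h
      nlinarith [mul_nonneg (by linarith : (0:ℝ) ≤ c - r) (by linarith : (0:ℝ) ≤ d - r)]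
    have hrd1 : r < d := by
      by_contra h
      push_neg at h
      nlinarith [mul_nonneg (by linarith : (0:ℝ) ≤ r - c) (by linarith : (0:ℝ) ≤ r - d)]
    -- split the integral at r
    have hsplit : (∫ h in c..r, |a + b * h|) + (∫ h in r..d, |a + b * h|)
        = ∫ h in c..d, |a + b * h| :=
      intervalIntegral.integral_add_adjacent_intervals
        (hcont.intervalIntegrable c r) (hcont.intervalIntegrable r d)
    have h1 : |∫ h in c..r, (a + b * h)| ≤ ∫ h in c..r, |a + b * h| :=
      intervalIntegral.abs_integral_le_integral_abs hcr1.le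
    have h2 : |∫ h in r..d, (a + b * h)| ≤ ∫ h in r..d, |a + b * h| :=
      intervalIntegral.abs_integral_le_integral_abs hrd1.le
    rw [integral_affine' a b c r, hfr] at h1
    rw [integral_affine' a b r d, hfr] at h2
    have e1 : |(r - c) * ((a + b * c) + 0) / 2| = (r - c) * |a + b * c| / 2 := by
      rw [add_zero, abs_div, abs_mul, abs_of_nonneg (by linarith : (0:ℝ) ≤ r - c)]
      norm_num
    have e2 : |(d - r) * (0 + (a + b * d)) / 2| = (d - r) * |a + b * d| / 2 := by
      rw [zero_add, abs_div, abs_mul, abs_of_nonneg (by linarith : (0:ℝ) ≤ d - r)]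
      norm_num
    rw [e1] at h1
    rw [e2] at h2
    -- key algebraic inequality
    have hu : |a + b * c| = |b| * (r - c) := by
      rw [hpr, abs_mul, abs_of_nonpos (by linarith : c - r ≤ 0)]; ring
    have hv : |a + b * d| = |b| * (d - r) := by
      rw [hqr, abs_mul, abs_of_nonneg (by linarith : (0:ℝ) ≤ d - r)]
    have key : (Real.sqrt 2 - 1) * (d - c) * max |a + b * c| |a + b * d| ≤
        (r - c) * |a + b * c| / 2 + (d - r) * |a + b * d| / 2 := by
      have heq : d - c = (r - c) + (d - r) := by ring
      rw [hu, hv, heq]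
      exact key_ineq (Real.sqrt 2) |b| (r - c) (d - r) hs2 (abs_nonneg b)
        (by linarith) (by linarith)
    linarith [key, h1, h2, hsplit]
end

section
/- Let K' ⊆ ℝⁿ be a convex body containing the segment [0, 2s·eₙ] with every horizontal slice K'_a = K' ∩ {xₙ = a} empty for a ∉ [0, 2s]. Then vol_n(K') ≥ (2s/n)·vol_{n−1}(K'_0). -/
set_option maxHeartbeats 1000000

open MeasureTheory Pointwise

/-- If a convex body `K' ⊆ ℝ^(n-1) × ℝ` (with `n = m + 1`) contains the segment
`[0, 2s·eₙ]` and all its horizontal slices at heights outside `[0, 2s]` are empty, then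
`vol_n(K') ≥ (2s/n) · vol_{n-1}(K'_0)`. -/
theorem volume_ge_of_slices
    (m : ℕ) (s : ℝ) (hs : 0 < s) (K' : Set (EuclideanSpace ℝ (Fin m) × ℝ))
    (hconv : Convex ℝ K') (hcomp : IsCompact K') (hint : (interior K').Nonempty)
    (hseg : segment ℝ (0 : EuclideanSpace ℝ (Fin m) × ℝ)
      ((0 : EuclideanSpace ℝ (Fin m)), 2 * s) ⊆ K')
    (hslice : ∀ a : ℝ, a ∉ Set.Icc 0 (2 * s) → {x : EuclideanSpace ℝ (Fin m) | (x, a) ∈ K'} = ∅) :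
    ENNReal.ofReal (2 * s / (m + 1)) * volume {x : EuclideanSpace ℝ (Fin m) | (x, 0) ∈ K'}
      ≤ volume K' := by
  have hs2 : (0:ℝ) < 2 * s := by linarith
  set S0 := {x : EuclideanSpace ℝ (Fin m) | (x, 0) ∈ K'} with hS0
  have hK'meas : MeasurableSet K' := hcomp.measurableSet
  -- slice inclusion
  have hsub : ∀ a ∈ Set.Icc (0:ℝ) (2*s),
      (1 - a/(2*s)) • S0 ⊆ {x : EuclideanSpace ℝ (Fin m) | (x, a) ∈ K'} := by
    rintro a ⟨ha0, ha2⟩ y ⟨x, hx, rfl⟩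
    have ht0 : 0 ≤ a / (2*s) := div_nonneg ha0 hs2.le
    have ht1 : a / (2*s) ≤ 1 := (div_le_one hs2).mpr ha2
    have h2s : ((0 : EuclideanSpace ℝ (Fin m)), 2*s) ∈ K' :=
      hseg (right_mem_segment ℝ _ _)
    have hmem := hconv hx h2s (by linarith : (0:ℝ) ≤ 1 - a/(2*s)) ht0 (by ring)
    have heq : (1 - a/(2*s)) • ((x, (0:ℝ)) : EuclideanSpace ℝ (Fin m) × ℝ)
        + (a/(2*s)) • (((0 : EuclideanSpace ℝ (Fin m)), 2*s))
        = (((1 - a/(2*s)) • x, a) : EuclideanSpace ℝ (Fin m) × ℝ) := by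
      ext
      · simp [Prod.smul_def]
      · simp [Prod.smul_def]
        field_simp
    rw [heq] at hmem
    exact hmem
  -- slice measure lower bound
  have hbound : ∀ a ∈ Set.Ioc (0:ℝ) (2*s),
      ENNReal.ofReal ((1 - a/(2*s))^m) * volume S0
        ≤ volume {x : EuclideanSpace ℝ (Fin m) | (x, a) ∈ K'} := by
    intro a ha
    have ha' : a ∈ Set.Icc (0:ℝ) (2*s) := ⟨ha.1.le, ha.2⟩
    have h1 : volume ((1 - a/(2*s)) • S0)
        = ENNReal.ofReal (|(1 - a/(2*s)) ^ Module.finrank ℝ (EuclideanSpace ℝ (Fin m))|) * volume S0 :=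
      Measure.addHaar_smul _ _ _
    have hnn : (0:ℝ) ≤ 1 - a/(2*s) := by
      have : a / (2*s) ≤ 1 := (div_le_one hs2).mpr ha'.2
      linarith
    rw [finrank_euclideanSpace_fin, abs_of_nonneg (pow_nonneg hnn m)] at h1
    calc ENNReal.ofReal ((1 - a/(2*s))^m) * volume S0 = volume ((1 - a/(2*s)) • S0) := h1.symm
      _ ≤ _ := measure_mono (hsub a ha')
  -- Fubini
  have hvol : volume K' = ∫⁻ a : ℝ, volume {x : EuclideanSpace ℝ (Fin m) | (x, a) ∈ K'} := by
    rw [Measure.volume_eq_prod, Measure.prod_apply_symm hK'meas]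
    rfl
  -- the real integral
  have hI : ∫ a in (0:ℝ)..(2*s), (1 - a/(2*s))^m = 2*s/(m+1) := by
    have hfun : ∀ a : ℝ, (1 - a/(2*s))^m = ((2*s - a) * (1/(2*s)))^m := by
      intro a; congr 1; field_simp
    simp only [hfun]
    rw [intervalIntegral.integral_comp_sub_left (fun u => (u * (1/(2*s)))^m) (2*s)]
    simp only [mul_pow]
    rw [intervalIntegral.integral_mul_const]
    norm_num
    have hm : ((m:ℝ)+1) ≠ 0 := by positivity
    have hp : ((2*s):ℝ)^m ≠ 0 := by positivity
    have hsn : s ≠ 0 := hs.ne'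
    rw [show s⁻¹ * (1/2) = (2*s)⁻¹ by field_simp]
    rw [inv_pow]
    field_simp
    ring
  -- the lintegral
  have hnn' : (fun _ : ℝ => (0:ℝ)) ≤ᵐ[volume.restrict (Set.Ioc 0 (2*s))]
      fun a => (1 - a/(2*s))^m := by
    filter_upwards [ae_restrict_mem measurableSet_Ioc] with a ha
    have : a / (2*s) ≤ 1 := (div_le_one hs2).mpr ha.2
    exact pow_nonneg (by linarith) m
  have hcont : Continuous fun a : ℝ => (1 - a/(2*s))^m := by fun_prop
  have hint' : IntegrableOn (fun a => (1 - a/(2*s))^m) (Set.Ioc 0 (2*s)) volume :=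
    (hcont.integrableOn_Icc (a := 0) (b := 2*s)).mono_set Set.Ioc_subset_Icc_self
  have hL : ∫⁻ a in Set.Ioc (0:ℝ) (2*s), ENNReal.ofReal ((1 - a/(2*s))^m)
      = ENNReal.ofReal (2*s/(m+1)) := by
    rw [← ofReal_integral_eq_lintegral_ofReal hint' hnn']
    congr 1
    rw [← intervalIntegral.integral_of_le hs2.le]
    exact hI
  calc ENNReal.ofReal (2 * s / (m + 1)) * volume S0
      = (∫⁻ a in Set.Ioc (0:ℝ) (2*s), ENNReal.ofReal ((1 - a/(2*s))^m)) * volume S0 := by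
        rw [hL]
    _ = ∫⁻ a in Set.Ioc (0:ℝ) (2*s), ENNReal.ofReal ((1 - a/(2*s))^m) * volume S0 := by
        rw [lintegral_mul_const _ (by fun_prop)]
    _ ≤ ∫⁻ a in Set.Ioc (0:ℝ) (2*s),
          volume {x : EuclideanSpace ℝ (Fin m) | (x, a) ∈ K'} := by
        refine lintegral_mono_ae ?_
        filter_upwards [ae_restrict_mem measurableSet_Ioc] with a ha
        exact hbound a ha
    _ ≤ ∫⁻ a : ℝ, volume {x : EuclideanSpace ℝ (Fin m) | (x, a) ∈ K'} :=
        setLIntegral_le_lintegral _ _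
    _ = volume K' := hvol.symm
end

section
/- Let L be a full-rank lattice in ℝⁿ and let VR denote its Voronoi relevant vectors. Then every v ∈ VR satisfies ‖v‖₂ ≤ 2μ(L), and max_{v ∈ VR} ‖v‖₂ ≥ 2μ(L)/√n. -/
open Finset RealInnerProductSpace in
lemma babai_aux {n : ℕ} : ∀ (k : ℕ) (w : Fin k → EuclideanSpace ℝ (Fin n)),
    ∀ t ∈ Submodule.span ℝ (Set.range w), ∃ c : Fin k → ℤ,
      ‖t - ∑ i, (c i : ℝ) • w i‖ ^ 2 ≤ (∑ i, ‖w i‖ ^ 2) / 4 := by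
  intro k
  induction k with
  | zero =>
    intro w t ht
    refine ⟨0, ?_⟩
    have : Set.range w = ∅ := Set.range_eq_empty w
    rw [this, Submodule.span_empty, Submodule.mem_bot] at ht
    simp [ht]
  | succ k ih =>
    intro w t ht
    obtain ⟨d, hd⟩ := (Submodule.mem_span_range_iff_exists_fun ℝ).mp ht
    let w' : Fin k → EuclideanSpace ℝ (Fin n) := fun i => w i.castSucc
    let V : Submodule ℝ (EuclideanSpace ℝ (Fin n)) := Submodule.span ℝ (Set.range w')
    let p : EuclideanSpace ℝ (Fin n) := (Submodule.orthogonalProjectionOnto V (w (Fin.last k)) : EuclideanSpace ℝ (Fin n))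
    have hpV : p ∈ V := (Submodule.orthogonalProjectionOnto V (w (Fin.last k))).2
    let g : EuclideanSpace ℝ (Fin n) := w (Fin.last k) - p
    have hgV : g ∈ Vᗮ := Submodule.sub_starProjection_mem_orthogonal _
    let s : ℝ := d (Fin.last k)
    let v : EuclideanSpace ℝ (Fin n) := ∑ i : Fin k, d i.castSucc • w' i
    have hvV : v ∈ V := Submodule.sum_mem _ (fun i _ => Submodule.smul_mem _ _
      (Submodule.subset_span (Set.mem_range_self i)))
    have htv : t = v + s • w (Fin.last k) := by
      rw [← hd, Fin.sum_univ_castSucc]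
    let m : ℤ := round s
    let q : EuclideanSpace ℝ (Fin n) := v + (s - m) • p
    have hqV : q ∈ V := Submodule.add_mem _ hvV (Submodule.smul_mem _ _ hpV)
    obtain ⟨c', hc'⟩ := ih w' q hqV
    refine ⟨Fin.snoc c' m, ?_⟩
    let y' : EuclideanSpace ℝ (Fin n) := ∑ i : Fin k, (c' i : ℝ) • w' i
    have hy'V : y' ∈ V := Submodule.sum_mem _ (fun i _ => Submodule.smul_mem _ _
      (Submodule.subset_span (Set.mem_range_self i)))
    have hsum : ∑ i : Fin (k+1), ((Fin.snoc c' m : Fin (k+1) → ℤ) i : ℝ) • w i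
        = y' + (m : ℝ) • w (Fin.last k) := by
      rw [Fin.sum_univ_castSucc]
      simp [w', y']
    have key : t - ∑ i : Fin (k+1), ((Fin.snoc c' m : Fin (k+1) → ℤ) i : ℝ) • w i
        = (q - y') + (s - m) • g := by
      rw [hsum, htv]
      show v + s • w (Fin.last k) - (y' + (m : ℝ) • w (Fin.last k))
        = (v + (s - m) • p - y') + (s - m) • (w (Fin.last k) - p)
      module
    have horth : ⟪q - y', (s - (m : ℝ)) • g⟫ = 0 := by
      rw [real_inner_smul_right,
        (Submodule.mem_orthogonal V g).mp hgV (q - y') (Submodule.sub_mem _ hqV hy'V)]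
      ring
    have hpyth : ‖t - ∑ i : Fin (k+1), ((Fin.snoc c' m : Fin (k+1) → ℤ) i : ℝ) • w i‖ ^ 2
        = ‖q - y'‖ ^ 2 + ‖(s - (m : ℝ)) • g‖ ^ 2 := by
      rw [key, norm_add_sq_real, horth]; ring
    have hglast : ‖g‖ ^ 2 ≤ ‖w (Fin.last k)‖ ^ 2 := by
      have hpg : ⟪p, g⟫ = 0 := (Submodule.mem_orthogonal V g).mp hgV p hpV
      have hw : w (Fin.last k) = p + g := by show _ = p + (w (Fin.last k) - p); abel
      rw [hw, norm_add_sq_real, hpg]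
      nlinarith [sq_nonneg ‖p‖]
    have hround : |s - (m : ℝ)| ≤ 1 / 2 := abs_sub_round s
    have hsm : ‖(s - (m : ℝ)) • g‖ ^ 2 ≤ ‖w (Fin.last k)‖ ^ 2 / 4 := by
      rw [norm_smul, Real.norm_eq_abs, mul_pow]
      have h1 : |s - (m : ℝ)| ^ 2 ≤ 1 / 4 := by nlinarith [abs_nonneg (s - (m:ℝ))]
      nlinarith [sq_nonneg ‖g‖, norm_nonneg g]
    rw [hpyth, Fin.sum_univ_castSucc ((fun i => ‖w i‖ ^ 2))]
    have hws : ∑ i : Fin k, ‖w' i‖ ^ 2 = ∑ i : Fin k, ‖w i.castSucc‖ ^ 2 := rfl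
    rw [hws] at hc'
    linarith


lemma lattice_ball_finite {n : ℕ} (L : Submodule ℤ (EuclideanSpace ℝ (Fin n)))
    [DiscreteTopology L] (R : ℝ) :
    {y : EuclideanSpace ℝ (Fin n) | y ∈ L ∧ ‖y‖ ≤ R}.Finite := by
  haveI : DiscreteTopology L.toAddSubgroup := ‹DiscreteTopology L›
  have hclosed : IsClosed (L : Set (EuclideanSpace ℝ (Fin n))) :=
    AddSubgroup.isClosed_of_discrete (H := L.toAddSubgroup)
  have hset : {y : EuclideanSpace ℝ (Fin n) | y ∈ L ∧ ‖y‖ ≤ R}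
      = (L : Set (EuclideanSpace ℝ (Fin n))) ∩ Metric.closedBall 0 R := by
    ext y; simp [mem_closedBall_zero_iff]
  rw [hset]
  have hcpt : IsCompact ((L : Set (EuclideanSpace ℝ (Fin n))) ∩ Metric.closedBall 0 R) :=
    (isCompact_closedBall 0 R).inter_left hclosed
  haveI : DiscreteTopology ((L : Set (EuclideanSpace ℝ (Fin n))) ∩ Metric.closedBall 0 R :
      Set (EuclideanSpace ℝ (Fin n))) := by
    have : DiscreteTopology (L : Set (EuclideanSpace ℝ (Fin n))) := ‹DiscreteTopology L›
    exact DiscreteTopology.of_subset this Set.inter_subset_left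
  exact hcpt.finite (isDiscrete_iff_discreteTopology.mpr (by assumption))



lemma vr_span {n : ℕ} (L : Submodule ℤ (EuclideanSpace ℝ (Fin n)))
    [DiscreteTopology L]
    (VR : Set (EuclideanSpace ℝ (Fin n)))
    (hVR : VR = {v | v ∈ L ∧ v ≠ 0 ∧
      ∀ z, (∃ w ∈ L, z = v + (2 : ℝ) • w) → z ≠ v → z ≠ -v → ‖v‖ < ‖z‖}) :
    ∀ x ∈ L, x ∈ Submodule.span ℝ VR := by
  have key : ∀ N : ℕ, ∀ x : EuclideanSpace ℝ (Fin n), x ∈ L →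
      {y : EuclideanSpace ℝ (Fin n) | y ∈ L ∧ ‖y‖ ≤ ‖x‖}.ncard ≤ N →
      x ∈ Submodule.span ℝ VR := by
    intro N
    induction N with
    | zero =>
      intro x hx hcard
      exfalso
      have hfin := lattice_ball_finite L ‖x‖
      have hpos : 0 < {y : EuclideanSpace ℝ (Fin n) | y ∈ L ∧ ‖y‖ ≤ ‖x‖}.ncard := by
        rw [Set.ncard_pos hfin]
        exact ⟨x, hx, le_refl _⟩
      omega
    | succ N ih =>
      intro x hx hcard
      by_cases hx0 : x = 0
      · rw [hx0]; exact Submodule.zero_mem _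
      by_cases hvr : ∀ z, (∃ w ∈ L, z = x + (2 : ℝ) • w) → z ≠ x → z ≠ -x → ‖x‖ < ‖z‖
      · exact Submodule.subset_span (by rw [hVR]; exact ⟨hx, hx0, hvr⟩)
      push_neg at hvr
      obtain ⟨u, ⟨w0, hw0L, hw0⟩, hux, hunx, hule⟩ := hvr
      -- u ∈ L
      have huL : u ∈ L := by
        rw [hw0]
        have h2 : (2 : ℝ) • w0 = w0 + w0 := two_smul ℝ w0
        rw [h2]
        exact L.add_mem hx (L.add_mem hw0L hw0L)
      -- the two halves
      have hw1L : (1/2 : ℝ) • (x + u) ∈ L := by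
        have : (1/2 : ℝ) • (x + u) = x + w0 := by rw [hw0]; module
        rw [this]; exact L.add_mem hx hw0L
      have hw2L : (1/2 : ℝ) • (x - u) ∈ L := by
        have : (1/2 : ℝ) • (x - u) = -w0 := by rw [hw0]; module
        rw [this]; exact L.neg_mem hw0L
      have hw1ne : (1/2 : ℝ) • (x + u) ≠ 0 := by
        intro h
        apply hunx
        rcases smul_eq_zero.mp h with h | h
        · norm_num at h
        · rw [add_eq_zero_iff_eq_neg] at h
          rw [h, neg_neg]
      have hw2ne : (1/2 : ℝ) • (x - u) ≠ 0 := by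
        intro h
        apply hux
        rcases smul_eq_zero.mp h with h | h
        · norm_num at h
        · rw [sub_eq_zero] at h; exact h.symm
      -- norm bounds
      have hpar : ‖(1/2 : ℝ) • (x + u)‖ ^ 2 + ‖(1/2 : ℝ) • (x - u)‖ ^ 2
          = (‖x‖ ^ 2 + ‖u‖ ^ 2) / 2 := by
        rw [norm_smul, norm_smul, mul_pow, mul_pow]
        have h1 := norm_add_sq_real x u
        have h2 := norm_sub_sq_real x u
        simp only [Real.norm_eq_abs]
        rw [abs_of_pos (by norm_num : (0:ℝ) < 1/2)]
        nlinarith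
      have hxpos : 0 < ‖x‖ := norm_pos_iff.mpr hx0
      have hle2 : ‖(1/2 : ℝ) • (x + u)‖ ^ 2 + ‖(1/2 : ℝ) • (x - u)‖ ^ 2 ≤ ‖x‖ ^ 2 := by
        rw [hpar]; nlinarith [hule, norm_nonneg u, norm_nonneg x]
      have hn1 : ‖(1/2 : ℝ) • (x + u)‖ < ‖x‖ := by
        have h2pos : 0 < ‖(1/2 : ℝ) • (x - u)‖ := norm_pos_iff.mpr hw2ne
        nlinarith [norm_nonneg ((1/2 : ℝ) • (x + u))]
      have hn2 : ‖(1/2 : ℝ) • (x - u)‖ < ‖x‖ := by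
        have h1pos : 0 < ‖(1/2 : ℝ) • (x + u)‖ := norm_pos_iff.mpr hw1ne
        nlinarith [norm_nonneg ((1/2 : ℝ) • (x - u))]
      -- apply IH
      have hsub : ∀ y : EuclideanSpace ℝ (Fin n), y ∈ L → ‖y‖ < ‖x‖ →
          {z : EuclideanSpace ℝ (Fin n) | z ∈ L ∧ ‖z‖ ≤ ‖y‖}.ncard ≤ N := by
        intro y hy hylt
        have hss : {z : EuclideanSpace ℝ (Fin n) | z ∈ L ∧ ‖z‖ ≤ ‖y‖}
            ⊂ {z : EuclideanSpace ℝ (Fin n) | z ∈ L ∧ ‖z‖ ≤ ‖x‖} := by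
          constructor
          · intro z ⟨hz1, hz2⟩; exact ⟨hz1, hz2.trans hylt.le⟩
          · intro hcon
            have := hcon ⟨hx, le_refl _⟩
            exact absurd this.2 (not_le.mpr hylt)
        have := Set.ncard_lt_ncard hss (lattice_ball_finite L ‖x‖)
        omega
      have m1 := ih _ hw1L (hsub _ hw1L hn1)
      have m2 := ih _ hw2L (hsub _ hw2L hn2)
      have hxeq : x = (1/2 : ℝ) • (x + u) + (1/2 : ℝ) • (x - u) := by module
      rw [hxeq]
      exact Submodule.add_mem _ m1 m2
  intro x hx
  exact key _ x hx (le_refl _)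








lemma cov_bound {n m : ℕ} (L : Submodule ℤ (EuclideanSpace ℝ (Fin n)))
    (w : Fin m → EuclideanSpace ℝ (Fin n)) (hmem : ∀ i, w i ∈ L)
    (hspan : Submodule.span ℝ (Set.range w) = ⊤) (t : EuclideanSpace ℝ (Fin n)) :
    sInf {r | ∃ y ∈ L, ‖t - y‖ = r} ≤ Real.sqrt ((∑ i, ‖w i‖ ^ 2) / 4) := by
  obtain ⟨c, hc⟩ := babai_aux m w t (by rw [hspan]; trivial)
  have hyL : (∑ i, (c i : ℝ) • w i) ∈ L := Submodule.sum_mem _ (fun i _ => by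
    rw [Int.cast_smul_eq_zsmul]
    exact L.smul_mem (c i) (hmem i))
  have h1 : sInf {r | ∃ y ∈ L, ‖t - y‖ = r} ≤ ‖t - ∑ i, (c i : ℝ) • w i‖ :=
    csInf_le ⟨0, fun r ⟨y, _, hr⟩ => hr ▸ norm_nonneg _⟩ ⟨_, hyL, rfl⟩
  have h2 : ‖t - ∑ i, (c i : ℝ) • w i‖ ≤ Real.sqrt ((∑ i, ‖w i‖ ^ 2) / 4) := by
    have := Real.sqrt_le_sqrt hc
    rwa [Real.sqrt_sq (norm_nonneg _)] at this
  exact h1.trans h2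

set_option maxHeartbeats 1000000 in
/-- Every Voronoi relevant vector `v` of a full-rank lattice `L ⊆ ℝⁿ` satisfies
`‖v‖ ≤ 2μ(L)`, and some Voronoi relevant vector has `‖v‖ ≥ 2μ(L)/√n`.
Voronoi relevant vectors are characterized (Voronoi's theorem) as the nonzero `v ∈ L`
such that `±v` are the unique minimizers of the norm over `v + 2L`. -/
theorem voronoi_relevant_norm_bounds
    (n : ℕ) (hn : 1 ≤ n) (L : Submodule ℤ (EuclideanSpace ℝ (Fin n)))
    [DiscreteTopology L] [IsZLattice ℝ L]
    (VR : Set (EuclideanSpace ℝ (Fin n)))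
    (hVR : VR = {v | v ∈ L ∧ v ≠ 0 ∧
      ∀ z, (∃ w ∈ L, z = v + (2 : ℝ) • w) → z ≠ v → z ≠ -v → ‖v‖ < ‖z‖})
    (mu : ℝ)
    (hmu : mu = ⨆ t : EuclideanSpace ℝ (Fin n), sInf {r | ∃ y ∈ L, ‖t - y‖ = r}) :
    (∀ v ∈ VR, ‖v‖ ≤ 2 * mu) ∧ (∃ v ∈ VR, 2 * mu / Real.sqrt n ≤ ‖v‖) := by
  classical
  -- boundedness of the covering function, via a lattice basis
  haveI : Module.Finite ℤ L := ZLattice.module_finite ℝ L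
  haveI : Module.Free ℤ L := ZLattice.module_free ℝ L
  obtain ⟨C, hC⟩ : ∃ C, ∀ t : EuclideanSpace ℝ (Fin n),
      sInf {r | ∃ y ∈ L, ‖t - y‖ = r} ≤ C := by
    let b := Module.Free.chooseBasis ℤ L
    let b' := Module.Basis.ofZLatticeBasis ℝ L b
    haveI : Fintype (Module.Free.ChooseBasisIndex ℤ L) := inferInstance
    let e := Fintype.equivFin (Module.Free.ChooseBasisIndex ℤ L)
    let w := fun i => b' (e.symm i)
    have hwmem : ∀ i, w i ∈ L := fun i => by
      have h := b.ofZLatticeBasis_apply ℝ L (e.symm i)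
      show b' (e.symm i) ∈ L
      rw [h]
      exact (b (e.symm i)).2
    have hwspan : Submodule.span ℝ (Set.range w) = ⊤ := by
      have : Set.range w = Set.range b' := by
        rw [show w = b' ∘ e.symm from rfl, Set.range_comp, Equiv.range_eq_univ, Set.image_univ]
      rw [this, b'.span_eq]
    exact ⟨_, fun t => cov_bound L w hwmem hwspan t⟩
  have hbdd : BddAbove (Set.range fun t : EuclideanSpace ℝ (Fin n) =>
      sInf {r | ∃ y ∈ L, ‖t - y‖ = r}) := ⟨C, by rintro r ⟨t, rfl⟩; exact hC t⟩
  -- Part 1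
  have part1 : ∀ v ∈ VR, ‖v‖ ≤ 2 * mu := by
    intro v hv
    rw [hVR] at hv
    obtain ⟨hvL, hv0, hvmin⟩ := hv
    by_contra hcon
    push_neg at hcon
    set ε := (‖v‖ - 2 * mu) / 2 with hε
    have hεpos : 0 < ε := by simp only [hε]; linarith
    have hle : sInf {r | ∃ y ∈ L, ‖(2⁻¹ : ℝ) • v - y‖ = r} ≤ mu := by
      rw [hmu]
      exact le_ciSup hbdd ((2⁻¹ : ℝ) • v)
    have hlt : sInf {r | ∃ y ∈ L, ‖(2⁻¹ : ℝ) • v - y‖ = r} < mu + ε :=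
      lt_of_le_of_lt hle (by linarith)
    have hne : {r | ∃ y ∈ L, ‖(2⁻¹ : ℝ) • v - y‖ = r}.Nonempty :=
      ⟨‖(2⁻¹ : ℝ) • v - 0‖, 0, L.zero_mem, rfl⟩
    obtain ⟨r, ⟨y, hyL, hry⟩, hrlt⟩ := exists_lt_of_csInf_lt hne hlt
    -- z = v - 2y = v + 2 • (-y)
    have hkey : ‖v - (2:ℝ) • y‖ = 2 * r := by
      rw [← hry, show v - (2:ℝ) • y = (2:ℝ) • ((2⁻¹ : ℝ) • v - y) by module,
        norm_smul]
      simp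
    have h2r : 2 * r < 2 * mu + 2 * ε := by linarith
    have hfin : ‖v‖ < 2 * mu + 2 * ε := by
      by_cases hz1 : v - (2:ℝ) • y = v
      · have hy2 : (2:ℝ) • y = 0 := sub_eq_self.mp hz1
        have hy0 : y = 0 := by
          rcases smul_eq_zero.mp hy2 with h | h
          · norm_num at h
          · exact h
        have hvr : ‖v‖ = 2 * r := by
          rw [← hry, hy0, sub_zero, norm_smul, Real.norm_eq_abs,
            abs_of_nonneg (by norm_num : (0:ℝ) ≤ 2⁻¹)]
          ring
        linarith
      by_cases hz2 : v - (2:ℝ) • y = -v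
      · have h0 : (2:ℝ) • v - (2:ℝ) • y = (v - (2:ℝ) • y) + v := by module
        rw [hz2] at h0
        simp only [neg_add_cancel] at h0
        have hyv : y = v := by
          have h1 : (2:ℝ) • v = (2:ℝ) • y := by
            have := sub_eq_zero.mp h0
            exact this
          exact (smul_right_injective _ (by norm_num : (2:ℝ) ≠ 0) h1).symm
        have hvr : ‖v‖ = 2 * r := by
          rw [← hry, hyv, show (2⁻¹:ℝ) • v - v = (-(2⁻¹) : ℝ) • v by module,
            norm_smul, Real.norm_eq_abs]
          rw [show |(-(2⁻¹) : ℝ)| = 2⁻¹ by norm_num]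
          ring
        linarith
      · have := hvmin (v - (2:ℝ) • y) ⟨-y, L.neg_mem hyL, by module⟩ hz1 hz2
        linarith [hkey ▸ this, h2r]
    simp only [hε] at hfin
    linarith
  refine ⟨part1, ?_⟩
  -- VR spans
  have hspanVR : Submodule.span ℝ VR = ⊤ := by
    refine le_antisymm le_top ?_
    calc (⊤ : Submodule ℝ (EuclideanSpace ℝ (Fin n)))
        = Submodule.span ℝ (L : Set (EuclideanSpace ℝ (Fin n))) :=
          (IsZLattice.span_top).symm
      _ ≤ Submodule.span ℝ VR := Submodule.span_le.mpr (fun x hx => vr_span L VR hVR x hx)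
  -- VR nonempty
  have hVRne : VR.Nonempty := by
    by_contra h
    rw [Set.not_nonempty_iff_eq_empty] at h
    rw [h, Submodule.span_empty] at hspanVR
    have hmem : (EuclideanSpace.single (⟨0, hn⟩ : Fin n) (1:ℝ))
        ∈ (⊥ : Submodule ℝ (EuclideanSpace ℝ (Fin n))) := by
      rw [hspanVR]; trivial
    rw [Submodule.mem_bot] at hmem
    have h2 := congrArg (fun f => f (⟨0, hn⟩ : Fin n)) hmem
    simp [EuclideanSpace.single_apply] at h2
  -- VR finite
  have hVRfin : VR.Finite := by
    refine (lattice_ball_finite L (2 * mu)).subset ?_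
    intro v hv
    have hvL : v ∈ L := by rw [hVR] at hv; exact hv.1
    exact ⟨hvL, part1 v hv⟩
  -- max element
  obtain ⟨v₀, hv₀VR, hv₀max⟩ := Set.exists_max_image VR (fun v => ‖v‖) hVRfin hVRne
  refine ⟨v₀, hv₀VR, ?_⟩
  -- independent spanning subset of VR
  obtain ⟨bset, hbsub, hbspan, hbind⟩ := exists_linearIndependent ℝ VR
  have hbfin : bset.Finite := hbind.setFinite
  obtain ⟨m, f, hfrange⟩ := hbfin.fin_embedding
  set w : Fin m → EuclideanSpace ℝ (Fin n) := fun i => f i with hw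
  have hwVR : ∀ i, w i ∈ VR := fun i => hbsub (hfrange ▸ Set.mem_range_self i)
  have hwL : ∀ i, w i ∈ L := fun i => by
    have := hwVR i; rw [hVR] at this; exact this.1
  have hwspan : Submodule.span ℝ (Set.range w) = ⊤ := by
    have : Set.range w = bset := hfrange
    rw [this, hbspan, hspanVR]
  have hwind : LinearIndependent ℝ w := by
    have hginj : Function.Injective
        (fun i : Fin m => (⟨f i, hfrange ▸ Set.mem_range_self i⟩ : bset)) := by
      intro i j hij
      exact f.injective (congrArg Subtype.val hij)
    exact hbind.comp _ hginj
  have hmn : m ≤ n := by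
    have h1 := hwind.fintype_card_le_finrank
    simpa [finrank_euclideanSpace_fin] using h1
  -- sum bound
  have hsum : (∑ i, ‖w i‖ ^ 2) ≤ (n : ℝ) * ‖v₀‖ ^ 2 := by
    have h1 : (∑ i, ‖w i‖ ^ 2) ≤ (m : ℝ) * ‖v₀‖ ^ 2 := by
      have := Finset.sum_le_card_nsmul Finset.univ (fun i => ‖w i‖ ^ 2) (‖v₀‖ ^ 2)
        (fun i _ => pow_le_pow_left₀ (norm_nonneg _) (hv₀max _ (hwVR i)) 2)
      simpa [nsmul_eq_mul] using this
    have h2 : (m : ℝ) ≤ (n : ℝ) := by exact_mod_cast hmn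
    nlinarith [sq_nonneg ‖v₀‖]
  -- covering radius bound
  have hsqrt : Real.sqrt (((n : ℝ) * ‖v₀‖ ^ 2) / 4) = Real.sqrt n * ‖v₀‖ / 2 := by
    rw [show ((n : ℝ) * ‖v₀‖ ^ 2) / 4 = (Real.sqrt n * ‖v₀‖ / 2) ^ 2 by
      linear_combination (‖v₀‖ ^ 2 / 4) * (Real.sq_sqrt (Nat.cast_nonneg n : (0:ℝ) ≤ n)).symm]
    exact Real.sqrt_sq (by positivity)
  have hmu_le : mu ≤ Real.sqrt n * ‖v₀‖ / 2 := by
    rw [hmu]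
    refine ciSup_le (fun t => ?_)
    calc sInf {r | ∃ y ∈ L, ‖t - y‖ = r}
        ≤ Real.sqrt ((∑ i, ‖w i‖ ^ 2) / 4) := cov_bound L w hwL hwspan t
      _ ≤ Real.sqrt (((n : ℝ) * ‖v₀‖ ^ 2) / 4) := Real.sqrt_le_sqrt (by linarith)
      _ = Real.sqrt n * ‖v₀‖ / 2 := hsqrt
  have hsn : 0 < Real.sqrt n := Real.sqrt_pos.mpr (by exact_mod_cast hn)
  rw [div_le_iff₀ hsn]
  nlinarith [hmu_le, hsn]
end
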